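/- Consider a finite MDP (S, A, P) with bounded reward function R : S × A → ℝ. If there exists a state s* ∈ S that is recurrent under every stationary policy, then the optimal expected average reward sup_π lim_{T→∞} (1/T) Σ_{k=0}^{T−1} E[R(s_k, a_k)] is independent of the initial state s₀. -/

import Mathlib

open Filter Topology MeasureTheory

section MDPDefs

variable {S A : Type*} [Fintype S] [Fintype A] [DecidableEq S] [DecidableEq A]

/-- `P` is a valid transition kernel for a finite MDP: each `P s a ·` is a
probability distribution on states. -/
def IsKernel (P : S → A → S → ℝ) : Prop :=
  (∀ s a s', 0 ≤ P s a s') ∧ ∀ s a, (∑ s' : S, P s a s') = 1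

/-- A (randomized) stationary policy: each `π s ·` is a probability
distribution on actions. -/
def IsPolicy (π : S → A → ℝ) : Prop :=
  (∀ s a, 0 ≤ π s a) ∧ ∀ s, (∑ a : A, π s a) = 1

/-- The deterministic policy associated with `f : S → A`. -/
def detPol (f : S → A) : S → A → ℝ := fun s a => if a = f s then 1 else 0

/-- The distribution of the state-action pair `(s_k, a_k)` of the Markov chain
induced by policy `π`, transition kernel `P` and initial state `s₀`. -/
noncomputable def stepDist (P : S → A → S → ℝ) (π : S → A → ℝ) (s₀ : S) :
    ℕ → S × A → ℝ
  | 0 => fun p => (if p.1 = s₀ then (1 : ℝ) else 0) * π p.1 p.2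
  | n + 1 => fun p =>
      (∑ q : S × A, stepDist P π s₀ n q * P q.1 q.2 p.1) * π p.1 p.2

/-- `E[R(s_k, a_k)]` for the chain induced by `π` from `s₀`. -/
noncomputable def expRw (P : S → A → S → ℝ) (π : S → A → ℝ) (s₀ : S)
    (R : S → A → ℝ) (k : ℕ) : ℝ :=
  ∑ p : S × A, stepDist P π s₀ k p * R p.1 p.2

/-- Discounted value `Σ_k γ^k E[R(s_k,a_k)]` of policy `π` from `s₀`. -/
noncomputable def discVal (P : S → A → S → ℝ) (π : S → A → ℝ) (s₀ : S)
    (R : S → A → ℝ) (γ : ℝ) : ℝ :=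
  ∑' k : ℕ, γ ^ k * expRw P π s₀ R k

/-- The running average `(1/T) Σ_{k<T} E[R(s_k,a_k)]`. -/
noncomputable def avgSeq (P : S → A → S → ℝ) (π : S → A → ℝ) (s₀ : S)
    (R : S → A → ℝ) (T : ℕ) : ℝ :=
  (∑ k ∈ Finset.range T, expRw P π s₀ R k) / (T : ℝ)

/-- Optimal expected average reward from initial state `s₀`:
`sup_π lim_T (1/T) Σ_{k<T} E[R(s_k,a_k)]`. -/
noncomputable def optAvg (P : S → A → S → ℝ) (s₀ : S) (R : S → A → ℝ) : ℝ :=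
  sSup {v : ℝ | ∃ π : S → A → ℝ, IsPolicy π ∧
    Tendsto (avgSeq P π s₀ R) atTop (nhds v)}

/-- Transition matrix of the Markov chain on `S` induced by policy `π`. -/
noncomputable def polMatrix (P : S → A → S → ℝ) (π : S → A → ℝ) :
    Matrix S S ℝ :=
  Matrix.of fun s s' => ∑ a : A, π s a * P s a s'

/-- Unichain MDP: for every stationary policy the induced chain is ergodic,
i.e. every state is reachable from every other state. -/
def Unichain (P : S → A → S → ℝ) : Prop :=
  ∀ π : S → A → ℝ, IsPolicy π → ∀ s s' : S,
    ∃ n : ℕ, 1 ≤ n ∧ 0 < ((polMatrix P π) ^ n) s s'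

/-- `sstar` is recurrent (reachable from every state) under every stationary
policy. -/
def RecurrentForAll (P : S → A → S → ℝ) (sstar : S) : Prop :=
  ∀ π : S → A → ℝ, IsPolicy π → ∀ s : S,
    ∃ n : ℕ, 1 ≤ n ∧ 0 < ((polMatrix P π) ^ n) s sstar

/-- `(st, ac)` is a trajectory of the MDP with kernel `P` under the probability
measure `μ`: the finite-dimensional distributions satisfy the Markov
transition law. -/
def IsTraj {Ω : Type*} [MeasurableSpace Ω] (μ : Measure Ω)
    (P : S → A → S → ℝ) (st : ℕ → Ω → S) (ac : ℕ → Ω → A) : Prop :=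
  ∀ (k : ℕ) (h : ℕ → S × A) (s' : S),
    μ {ω | (∀ i ≤ k, (st i ω, ac i ω) = h i) ∧ st (k + 1) ω = s'}
      = μ {ω | ∀ i ≤ k, (st i ω, ac i ω) = h i}
          * ENNReal.ofReal (P (h k).1 (h k).2 s')

/-- Policy `π` is feasible for the peak constraints `r^j(s_k,a_k) ≥ 0`
(holding with probability 1 for all times `k`): every state-action pair that
has positive probability at some time satisfies all constraints. -/
def Feasible {J : ℕ} (P : S → A → S → ℝ) (π : S → A → ℝ) (s₀ : S)
    (rc : Fin J → S → A → ℝ) : Prop :=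
  ∀ (k : ℕ) (p : S × A), stepDist P π s₀ k p ≠ 0 → ∀ j, 0 ≤ rc j p.1 p.2

/-- Truncated Lagrangian reward
`R̄(s,a) = max(-C, inf_{λ ≥ 0} (r(s,a) + Σ_j λ_j r^j(s,a)))`, with the infimum
taken in the extended reals. -/
noncomputable def Rbar {J : ℕ} (r : S → A → ℝ) (rc : Fin J → S → A → ℝ)
    (C : ℝ) (s : S) (a : A) : ℝ :=
  (max ((-C : ℝ) : EReal)
    (⨅ lam : {l : Fin J → ℝ // ∀ j, 0 ≤ l j},
      ((r s a + ∑ j : Fin J, lam.1 j * rc j s a : ℝ) : EReal))).toReal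

/-- Number of visits to `(s,a)` among times `1, …, t`. -/
def Nvis {Ω : Type*} (st : ℕ → Ω → S) (ac : ℕ → Ω → A)
    (t : ℕ) (s : S) (a : A) (ω : Ω) : ℕ :=
  ∑ k ∈ Finset.Icc 1 t, (if (st k ω, ac k ω) = (s, a) then 1 else 0)

end MDPDefs

open Filter Topology Matrix Finset
set_option linter.unusedSectionVars false
set_option linter.unusedVariables false

section Helpers
variable {S : Type*} [Fintype S] [DecidableEq S]

noncomputable def nrm (x : S → ℝ) : ℝ := ∑ s, |x s|

lemma nrm_nonneg (x : S → ℝ) : 0 ≤ nrm x :=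
  Finset.sum_nonneg fun s _ => abs_nonneg _

lemma abs_le_nrm (x : S → ℝ) (s : S) : |x s| ≤ nrm x :=
  Finset.single_le_sum (fun s _ => abs_nonneg (x s)) (Finset.mem_univ s)

lemma nrm_vecMul_le (x : S → ℝ) (B : Matrix S S ℝ) (c : ℝ)
    (hB : ∀ s s', 0 ≤ B s s') (hc : ∀ s, ∑ s', B s s' ≤ c) :
    nrm (x ᵥ* B) ≤ c * nrm x := by
  have h1 : nrm (x ᵥ* B) ≤ ∑ s', ∑ s, |x s| * B s s' := by
    refine Finset.sum_le_sum fun s' _ => ?_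
    refine (Finset.abs_sum_le_sum_abs _ _).trans ?_
    exact Finset.sum_le_sum fun s _ => by rw [abs_mul, abs_of_nonneg (hB s s')]
  rw [Finset.sum_comm] at h1
  refine h1.trans ?_
  rw [nrm, Finset.mul_sum]
  refine Finset.sum_le_sum fun s _ => ?_
  rw [← Finset.mul_sum, mul_comm c]
  exact mul_le_mul_of_nonneg_left (hc s) (abs_nonneg _)

/-- Sum of entries of `x ᵥ* B` when `B` has constant row sums. -/
lemma sum_vecMul (x : S → ℝ) (B : Matrix S S ℝ) (c : ℝ)
    (hc : ∀ s, ∑ s', B s s' = c) :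
    ∑ s', (x ᵥ* B) s' = c * ∑ s, x s := by
  simp only [Matrix.vecMul, dotProduct]
  rw [Finset.sum_comm]
  rw [Finset.mul_sum]
  refine Finset.sum_congr rfl fun s _ => ?_
  rw [← Finset.mul_sum, hc s, mul_comm]

/-- Contraction of total variation under a stochastic matrix with a column
bounded below by `ε`. -/
lemma nrm_vecMul_contract (x : S → ℝ) (hx : ∑ s, x s = 0)
    (Q : Matrix S S ℝ) (hQ0 : ∀ s s', 0 ≤ Q s s')
    (hQ1 : ∀ s, ∑ s', Q s s' = 1) (sstar : S) (ε : ℝ)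
    (hε : ∀ s, ε ≤ Q s sstar) :
    nrm (x ᵥ* Q) ≤ (1 - ε) * nrm x := by
  set B : Matrix S S ℝ := Matrix.of fun s s' => Q s s' - if s' = sstar then ε else 0 with hB
  have hxQ : x ᵥ* Q = x ᵥ* B := by
    funext s'
    simp only [Matrix.vecMul, dotProduct, hB, Matrix.of_apply, mul_sub]
    rw [Finset.sum_sub_distrib]
    have : ∑ s, x s * (if s' = sstar then ε else 0) = 0 := by
      rw [← Finset.sum_mul, hx, zero_mul]
    rw [this, sub_zero]
  rw [hxQ]
  refine nrm_vecMul_le x B (1 - ε) ?_ ?_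
  · intro s s'
    simp only [hB, Matrix.of_apply]
    by_cases h : s' = sstar
    · simp only [h, if_pos rfl, sub_nonneg]; exact hε s
    · simp [h, hQ0 s s']
  · intro s
    simp only [hB, Matrix.of_apply]
    rw [Finset.sum_sub_distrib, hQ1 s, Finset.sum_ite_eq' Finset.univ sstar fun _ => ε]
    simp

/-- Nonnegative with row sums one. -/
def StochMat (M : Matrix S S ℝ) : Prop := (∀ s s', 0 ≤ M s s') ∧ ∀ s, ∑ s', M s s' = 1

lemma StochMat.mul {M N : Matrix S S ℝ} (hM : StochMat M) (hN : StochMat N) : StochMat (M * N) := by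
  constructor
  · intro s s'
    rw [Matrix.mul_apply]
    exact Finset.sum_nonneg fun t _ => mul_nonneg (hM.1 s t) (hN.1 t s')
  · intro s
    simp only [Matrix.mul_apply]
    rw [Finset.sum_comm]
    have : ∀ t, ∑ s', M s t * N t s' = M s t := by
      intro t; rw [← Finset.mul_sum, hN.2 t, mul_one]
    simp only [this]; exact hM.2 s

lemma StochMat.pow {M : Matrix S S ℝ} (hM : StochMat M) (n : ℕ) : StochMat (M ^ n) := by
  induction n with
  | zero => constructor
            · intro s s'; rw [pow_zero, Matrix.one_apply]; positivity
            · intro s; simp [pow_zero, Matrix.one_apply]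
  | succ n ih => rw [pow_succ]; exact ih.mul hM


lemma nrm_sub_le (a b : S → ℝ) : nrm (fun s => a s - b s) ≤ nrm a + nrm b := by
  calc nrm (fun s => a s - b s) ≤ ∑ s, (|a s| + |b s|) :=
        Finset.sum_le_sum fun s _ => abs_sub (a s) (b s)
    _ = nrm a + nrm b := Finset.sum_add_distrib

lemma nrm_smul_sum_le (c : ℝ) (hc : 0 ≤ c) (f : ℕ → S → ℝ) (t : Finset ℕ) :
    nrm (fun s => c * ∑ k ∈ t, f k s) ≤ c * ∑ k ∈ t, nrm (f k) := by
  rw [nrm]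
  have h : ∀ s, |c * ∑ k ∈ t, f k s| ≤ c * ∑ k ∈ t, |f k s| := by
    intro s
    rw [abs_mul, abs_of_nonneg hc]
    exact mul_le_mul_of_nonneg_left (Finset.abs_sum_le_sum_abs _ _) hc
  refine (Finset.sum_le_sum fun s _ => h s).trans ?_
  rw [← Finset.mul_sum, Finset.sum_comm]
  simp [nrm, Finset.mul_sum]


lemma iterate_diff (x : S → ℝ) (B : Matrix S S ℝ) (hB : StochMat B) (c : ℝ)
    (h1 : nrm (fun s' => (x ᵥ* B) s' - x s') ≤ c) (m : ℕ) :
    nrm (fun s' => (x ᵥ* B ^ m) s' - x s') ≤ m * c := by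
  induction m with
  | zero => simp [Matrix.vecMul_one, nrm]
  | succ m ih =>
    have hsplit : (fun s' => (x ᵥ* B ^ (m + 1)) s' - x s')
        = fun s' => ((fun t => (x ᵥ* B ^ m) t - x t) ᵥ* B) s'
            + ((x ᵥ* B) s' - x s') := by
      funext s'
      have h2 : ((fun t => (x ᵥ* B ^ m) t - x t) ᵥ* B) s'
          = ((x ᵥ* B ^ m) ᵥ* B) s' - (x ᵥ* B) s' := by
        simp [Matrix.vecMul, dotProduct, sub_mul, Finset.sum_sub_distrib]
      rw [h2, Matrix.vecMul_vecMul, ← pow_succ]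
      ring
    rw [hsplit]
    have htri : nrm (fun s' => ((fun t => (x ᵥ* B ^ m) t - x t) ᵥ* B) s'
          + ((x ᵥ* B) s' - x s'))
        ≤ nrm ((fun t => (x ᵥ* B ^ m) t - x t) ᵥ* B)
          + nrm (fun s' => (x ᵥ* B) s' - x s') := by
      calc _ ≤ ∑ s', (|((fun t => (x ᵥ* B ^ m) t - x t) ᵥ* B) s'|
              + |(x ᵥ* B) s' - x s'|) :=
            Finset.sum_le_sum fun s' _ => abs_add_le _ _
        _ = _ := Finset.sum_add_distrib
    refine htri.trans ?_
    have hne := nrm_vecMul_le (fun t => (x ᵥ* B ^ m) t - x t) B 1 hB.1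
      (fun s => le_of_eq (hB.2 s))
    rw [one_mul] at hne
    have := hne.trans ih
    push_cast
    linarith
end Helpers

lemma cesaro_ergodic {S : Type*} [Fintype S] [DecidableEq S] [Nonempty S]
    (M : Matrix S S ℝ) (hM : StochMat M) (sstar : S)
    (hrec : ∀ s, ∃ n, 1 ≤ n ∧ 0 < (M ^ n) s sstar) (s₀ s₀' s' : S) :
    Tendsto (fun T : ℕ =>
        (∑ k ∈ Finset.range T, ((M ^ k) s₀ s' - (M ^ k) s₀' s')) / (T : ℝ))
      atTop (𝓝 0) := by
  classical
  -- the difference of initial distributions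
  set d : S → ℝ := fun s => (if s = s₀ then 1 else 0) - (if s = s₀' then 1 else 0) with hd
  have hd_sum : ∑ s, d s = 0 := by simp [hd, Finset.sum_sub_distrib]
  have hd_nrm : nrm d ≤ 2 := by
    have : ∀ s : S, |d s| ≤ |if s = s₀ then (1:ℝ) else 0| + |if s = s₀' then (1:ℝ) else 0| :=
      fun s => abs_sub _ _
    refine (Finset.sum_le_sum fun s _ => this s).trans ?_
    rw [Finset.sum_add_distrib]
    simp only [apply_ite abs, abs_one, abs_zero]
    rw [Finset.sum_ite_eq' Finset.univ s₀ fun _ => (1:ℝ),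
        Finset.sum_ite_eq' Finset.univ s₀' fun _ => (1:ℝ)]
    norm_num
  set y : ℕ → S → ℝ := fun k => d ᵥ* (M ^ k) with hy
  have hy_apply : ∀ k t, y k t = (M ^ k) s₀ t - (M ^ k) s₀' t := by
    intro k t
    simp only [hy, hd, Matrix.vecMul, dotProduct, sub_mul, ite_mul, one_mul,
      zero_mul, Finset.sum_sub_distrib]
    rw [Finset.sum_ite_eq' Finset.univ s₀ fun s => (M ^ k) s t,
        Finset.sum_ite_eq' Finset.univ s₀' fun s => (M ^ k) s t]
    simp
  have hy_nrm : ∀ k, nrm (y k) ≤ 2 := by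
    intro k
    have := nrm_vecMul_le d (M ^ k) 1 (hM.pow k).1 fun s => le_of_eq ((hM.pow k).2 s)
    rw [one_mul] at this
    exact this.trans hd_nrm
  have hy_sum : ∀ k, ∑ t, y k t = 0 := by
    intro k
    rw [hy, sum_vecMul d (M ^ k) 1 (hM.pow k).2, hd_sum, mul_zero]
  set x : ℕ → S → ℝ := fun T t => (T : ℝ)⁻¹ * ∑ k ∈ Finset.range T, y k t with hx
  have hx_sum : ∀ T, ∑ t, x T t = 0 := by
    intro T
    simp only [hx, ← Finset.mul_sum]
    rw [Finset.sum_comm]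
    simp [hy_sum]
  have hx_nrm : ∀ T, 1 ≤ T → nrm (x T) ≤ 2 := by
    intro T hT
    have h := nrm_smul_sum_le (T : ℝ)⁻¹ (by positivity) y (Finset.range T)
    refine h.trans ?_
    have h2 : ∑ k ∈ Finset.range T, nrm (y k) ≤ T * 2 := by
      have := Finset.sum_le_sum (fun k (_ : k ∈ Finset.range T) => hy_nrm k)
      simpa using this
    calc (T : ℝ)⁻¹ * ∑ k ∈ Finset.range T, nrm (y k) ≤ (T : ℝ)⁻¹ * (T * 2) := by
          refine mul_le_mul_of_nonneg_left h2 (by positivity)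
      _ = 2 := by
          field_simp
  -- one-step shift estimate
  have hxM : ∀ T t, (x T ᵥ* M) t = (T : ℝ)⁻¹ * ∑ k ∈ Finset.range T, y (k + 1) t := by
    intro T t
    simp only [Matrix.vecMul, dotProduct, hx]
    have h1 : ∀ s, ((T:ℝ)⁻¹ * ∑ k ∈ Finset.range T, y k s) * M s t
        = (T:ℝ)⁻¹ * ∑ k ∈ Finset.range T, y k s * M s t := by
      intro s; rw [mul_assoc, Finset.sum_mul]
    simp only [h1]
    rw [← Finset.mul_sum, Finset.sum_comm]
    congr 1
    refine Finset.sum_congr rfl fun k _ => ?_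
    have h2 : ∑ s, y k s * M s t = ((d ᵥ* M ^ k) ᵥ* M) t := rfl
    rw [h2, Matrix.vecMul_vecMul, ← pow_succ]
  have hstep : ∀ T : ℕ, nrm (fun t => (x T ᵥ* M) t - x T t) ≤ 4 * (T:ℝ)⁻¹ := by
    intro T
    have heq : (fun t => (x T ᵥ* M) t - x T t)
        = fun t => (T:ℝ)⁻¹ * (y T t - y 0 t) := by
      funext t
      rw [hxM]
      have h3 : ∑ k ∈ Finset.range T, y (k+1) t
          = ∑ k ∈ Finset.range T, y k t + (y T t - y 0 t) := by
        have ha := Finset.sum_range_succ' (fun k => y k t) T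
        have hb := Finset.sum_range_succ (fun k => y k t) T
        linarith
      rw [h3]
      simp only [hx]
      ring
    rw [heq]
    have h5 : nrm (fun t => (T:ℝ)⁻¹ * (y T t - y 0 t))
        = (T:ℝ)⁻¹ * nrm (fun t => y T t - y 0 t) := by
      have habs : |(T:ℝ)⁻¹| = (T:ℝ)⁻¹ := abs_of_nonneg (by positivity)
      simp [nrm, abs_mul, habs, Finset.mul_sum]
    rw [h5]
    have h4 : nrm (fun t => y T t - y 0 t) ≤ 4 := by
      refine (nrm_sub_le (y T) (y 0)).trans ?_
      linarith [hy_nrm T, hy_nrm 0]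
    calc (T:ℝ)⁻¹ * nrm (fun t => y T t - y 0 t) ≤ (T:ℝ)⁻¹ * 4 :=
          mul_le_mul_of_nonneg_left h4 (by positivity)
      _ = 4 * (T:ℝ)⁻¹ := mul_comm _ _
  have hstepm : ∀ (T m : ℕ), nrm (fun t => (x T ᵥ* M ^ m) t - x T t)
      ≤ m * (4 * (T:ℝ)⁻¹) :=
    fun T m => iterate_diff (x T) M hM _ (hstep T) m
  -- construction of the averaged matrix Q with positive column at sstar
  choose n hn1 hn2 using hrec
  set N : ℕ := Finset.univ.sup n with hNdef
  have hnN : ∀ s, n s ≤ N := fun s => Finset.le_sup (Finset.mem_univ s)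
  have hN1 : 1 ≤ N := le_trans (hn1 (Classical.arbitrary S)) (hnN _)
  have hNpos : (0:ℝ) < N := by exact_mod_cast hN1
  set Q : Matrix S S ℝ :=
    Matrix.of (fun s t => (N:ℝ)⁻¹ * ∑ k ∈ Finset.range N, (M ^ (k+1)) s t) with hQdef
  have hQ0 : ∀ s t, 0 ≤ Q s t := by
    intro s t
    simp only [hQdef, Matrix.of_apply]
    exact mul_nonneg (by positivity)
      (Finset.sum_nonneg fun k _ => (hM.pow (k+1)).1 s t)
  have hQ1 : ∀ s, ∑ t, Q s t = 1 := by
    intro s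
    simp only [hQdef, Matrix.of_apply, ← Finset.mul_sum]
    rw [Finset.sum_comm]
    have : ∀ k ∈ Finset.range N, ∑ t, (M ^ (k+1)) s t = 1 :=
      fun k _ => (hM.pow (k+1)).2 s
    rw [Finset.sum_congr rfl this]
    simp [Finset.sum_const]
    field_simp
  have hQs : ∀ s, 0 < Q s sstar := by
    intro s
    obtain ⟨j, hj⟩ : ∃ j, n s = j + 1 := ⟨n s - 1, by have := hn1 s; omega⟩
    have hjN : j ∈ Finset.range N := by
      rw [Finset.mem_range]; have := hnN s; omega
    have hterm : 0 < (M ^ (j+1)) s sstar := by rw [← hj]; exact hn2 s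
    have hsum : (M ^ (j+1)) s sstar ≤ ∑ k ∈ Finset.range N, (M ^ (k+1)) s sstar :=
      Finset.single_le_sum (fun k _ => (hM.pow (k+1)).1 s sstar) hjN
    have hpos : 0 < ∑ k ∈ Finset.range N, (M ^ (k+1)) s sstar :=
      lt_of_lt_of_le hterm hsum
    simp only [hQdef, Matrix.of_apply]
    exact mul_pos (by positivity) hpos
  set ε : ℝ := Finset.univ.inf' Finset.univ_nonempty (fun s => Q s sstar) with hεdef
  have hε_pos : 0 < ε := by
    rw [hεdef, Finset.lt_inf'_iff]
    exact fun s _ => hQs s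
  have hε_le : ∀ s, ε ≤ Q s sstar := fun s => Finset.inf'_le _ (Finset.mem_univ s)
  have hε1 : ε ≤ 1 := by
    have h := hε_le (Classical.arbitrary S)
    have h2 : Q (Classical.arbitrary S) sstar ≤ 1 := by
      rw [← hQ1 (Classical.arbitrary S)]
      exact Finset.single_le_sum (fun t _ => hQ0 _ t) (Finset.mem_univ sstar)
    linarith
  have hQst : StochMat Q := ⟨hQ0, hQ1⟩
  -- x T ᵥ* Q is close to x T
  have hxQ : ∀ T : ℕ, nrm (fun t => (x T ᵥ* Q) t - x T t) ≤ 4 * N * (T:ℝ)⁻¹ := by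
    intro T
    have heq : (fun t => (x T ᵥ* Q) t - x T t)
        = fun t => (N:ℝ)⁻¹ * ∑ k ∈ Finset.range N, ((x T ᵥ* M ^ (k+1)) t - x T t) := by
      funext t
      have h1 : (x T ᵥ* Q) t = (N:ℝ)⁻¹ * ∑ k ∈ Finset.range N, (x T ᵥ* M ^ (k+1)) t := by
        simp only [Matrix.vecMul, dotProduct, hQdef, Matrix.of_apply]
        have hpt : ∀ s, x T s * ((N:ℝ)⁻¹ * ∑ k ∈ Finset.range N, (M ^ (k+1)) s t)
            = ∑ k ∈ Finset.range N, (N:ℝ)⁻¹ * (x T s * (M ^ (k+1)) s t) := by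
          intro s
          rw [Finset.mul_sum, Finset.mul_sum]
          exact Finset.sum_congr rfl fun k _ => by ring
        simp only [hpt]
        rw [Finset.sum_comm, Finset.mul_sum]
        refine Finset.sum_congr rfl fun k _ => ?_
        rw [← Finset.mul_sum]
      rw [h1, Finset.sum_sub_distrib, mul_sub, Finset.sum_const, Finset.card_range,
        nsmul_eq_mul]
      have : (N:ℝ)⁻¹ * ((N:ℝ) * x T t) = x T t := by field_simp
      rw [this]
    rw [heq]
    refine (nrm_smul_sum_le (N:ℝ)⁻¹ (by positivity) _ _).trans ?_
    have hb : ∑ k ∈ Finset.range N, nrm (fun t => (x T ᵥ* M ^ (k+1)) t - x T t)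
        ≤ ∑ k ∈ Finset.range N, (N : ℝ) * (4 * (T:ℝ)⁻¹) := by
      refine Finset.sum_le_sum fun k hk => ?_
      refine (hstepm T (k+1)).trans ?_
      have hkN : ((k:ℝ) + 1) ≤ N := by
        rw [Finset.mem_range] at hk; exact_mod_cast hk
      have h4T : (0:ℝ) ≤ 4 * (T:ℝ)⁻¹ := by positivity
      calc ((k+1 : ℕ):ℝ) * (4 * (T:ℝ)⁻¹) ≤ (N:ℝ) * (4 * (T:ℝ)⁻¹) := by
            refine mul_le_mul_of_nonneg_right ?_ h4T
            push_cast; linarith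
        _ = _ := rfl
    refine (mul_le_mul_of_nonneg_left hb (by positivity)).trans ?_
    rw [Finset.sum_const, Finset.card_range, nsmul_eq_mul]
    have : (N:ℝ)⁻¹ * ((N:ℝ) * ((N:ℝ) * (4 * (T:ℝ)⁻¹))) = 4 * N * (T:ℝ)⁻¹ := by
      field_simp
    rw [this]
  -- contraction under powers of Q
  have hsumQ : ∀ T m, ∑ t, (x T ᵥ* Q ^ m) t = 0 := by
    intro T m
    rw [sum_vecMul (x T) (Q ^ m) 1 (hQst.pow m).2, hx_sum, mul_zero]
  have hcontr : ∀ T m, nrm (x T ᵥ* Q ^ m) ≤ (1 - ε) ^ m * nrm (x T) := by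
    intro T m
    induction m with
    | zero => simp [Matrix.vecMul_one]
    | succ m ih =>
      have h1 : x T ᵥ* Q ^ (m+1) = (x T ᵥ* Q ^ m) ᵥ* Q := by
        rw [Matrix.vecMul_vecMul, ← pow_succ]
      rw [h1]
      have h2 := nrm_vecMul_contract (x T ᵥ* Q ^ m) (hsumQ T m) Q hQ0 hQ1 sstar ε hε_le
      refine h2.trans ?_
      rw [pow_succ, mul_comm ((1-ε)^m), mul_assoc]
      exact mul_le_mul_of_nonneg_left ih (by linarith)
  have hclose : ∀ T m : ℕ, nrm (fun t => (x T ᵥ* Q ^ m) t - x T t)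
      ≤ m * (4 * N * (T:ℝ)⁻¹) :=
    fun T m => iterate_diff (x T) Q hQst _ (hxQ T) m
  -- the master bound
  have hmaster : ∀ (T m : ℕ), 1 ≤ T →
      nrm (x T) ≤ 2 * (1 - ε) ^ m + m * (4 * N * (T:ℝ)⁻¹) := by
    intro T m hT
    have htri : nrm (x T) ≤ nrm (x T ᵥ* Q ^ m)
        + nrm (fun t => (x T ᵥ* Q ^ m) t - x T t) := by
      calc nrm (x T) ≤ ∑ t, (|(x T ᵥ* Q ^ m) t| + |(x T ᵥ* Q ^ m) t - x T t|) := by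
            refine Finset.sum_le_sum fun t _ => ?_
            have h := abs_sub ((x T ᵥ* Q ^ m) t) ((x T ᵥ* Q ^ m) t - x T t)
            simpa [sub_sub_cancel] using h
        _ = _ := Finset.sum_add_distrib
    refine htri.trans ?_
    have h1 := (hcontr T m).trans
      (mul_le_mul_of_nonneg_left (hx_nrm T hT) (pow_nonneg (by linarith) m))
    have h2 := hclose T m
    calc nrm (x T ᵥ* Q ^ m) + nrm (fun t => (x T ᵥ* Q ^ m) t - x T t)
        ≤ (1 - ε) ^ m * 2 + m * (4 * N * (T:ℝ)⁻¹) := add_le_add h1 h2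
      _ = 2 * (1 - ε) ^ m + m * (4 * N * (T:ℝ)⁻¹) := by ring
  -- conclude
  have hgoal : Tendsto (fun T : ℕ => x T s') atTop (𝓝 0) := by
    rw [Metric.tendsto_atTop]
    intro δ hδ
    have hlt1 : 1 - ε < 1 := by linarith
    have hge0 : 0 ≤ 1 - ε := by linarith
    have hpow := tendsto_pow_atTop_nhds_zero_of_lt_one hge0 hlt1
    obtain ⟨m, hm⟩ := (hpow.eventually_lt_const (show (0:ℝ) < δ/4 by linarith)).exists
    set T₀ : ℕ := max 1 (Nat.ceil (8 * (N:ℝ) * m / δ)) with hT₀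
    refine ⟨T₀, fun T hT => ?_⟩
    have hT1 : 1 ≤ T := le_trans (le_max_left _ _) hT
    have hTpos : (0:ℝ) < T := by exact_mod_cast hT1
    have hceil : (8 * (N:ℝ) * m / δ) ≤ T := by
      refine le_trans (Nat.le_ceil _) ?_
      exact_mod_cast le_trans (le_max_right 1 _) hT
    have hsecond : (m:ℝ) * (4 * N * (T:ℝ)⁻¹) ≤ δ / 2 := by
      have hTne : (T:ℝ) ≠ 0 := ne_of_gt hTpos
      have h8 : 8 * (N:ℝ) * m ≤ δ * T := by
        calc 8 * (N:ℝ) * m = δ * (8 * N * m / δ) := by field_simp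
          _ ≤ δ * T := mul_le_mul_of_nonneg_left hceil (le_of_lt hδ)
      rw [show (m:ℝ) * (4 * N * (T:ℝ)⁻¹) = (4 * N * m) / T by field_simp,
        div_le_iff₀ hTpos]
      linarith
    have hfirst : 2 * (1 - ε) ^ m < δ / 2 := by
      have : (1 - ε) ^ m < δ / 4 := hm
      linarith
    have := hmaster T m hT1
    have habs : |x T s'| ≤ nrm (x T) := abs_le_nrm (x T) s'
    rw [Real.dist_eq, sub_zero]
    calc |x T s'| ≤ nrm (x T) := habs
      _ ≤ 2 * (1 - ε) ^ m + m * (4 * N * (T:ℝ)⁻¹) := this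
      _ < δ := by linarith
  -- identify the limit function
  have heq : (fun T : ℕ =>
      (∑ k ∈ Finset.range T, ((M ^ k) s₀ s' - (M ^ k) s₀' s')) / (T : ℝ))
      = fun T : ℕ => x T s' := by
    funext T
    rw [div_eq_inv_mul]
    simp only [hx]
    congr 1
    exact Finset.sum_congr rfl fun k _ => (hy_apply k s').symm
  rw [heq]
  exact hgoal

section MDPGlue
open Matrix Finset
variable {S A : Type*} [Fintype S] [Fintype A] [DecidableEq S] [DecidableEq A]

lemma polMatrix_stoch (P : S → A → S → ℝ) (hP : IsKernel P) (π : S → A → ℝ)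
    (hπ : IsPolicy π) : StochMat (polMatrix P π) := by
  constructor
  · intro s s'
    exact Finset.sum_nonneg fun a _ => mul_nonneg (hπ.1 s a) (hP.1 s a s')
  · intro s
    simp only [polMatrix, Matrix.of_apply]
    rw [Finset.sum_comm]
    have h : ∀ a, ∑ s', π s a * P s a s' = π s a := fun a => by
      rw [← Finset.mul_sum, hP.2, mul_one]
    simp only [h]
    exact hπ.2 s

lemma stepDist_eq (P : S → A → S → ℝ) (π : S → A → ℝ) (s₀ : S) (k : ℕ)
    (p : S × A) :
    stepDist P π s₀ k p = ((polMatrix P π) ^ k) s₀ p.1 * π p.1 p.2 := by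
  induction k generalizing p with
  | zero => simp [stepDist, Matrix.one_apply, eq_comm]
  | succ k ih =>
    simp only [stepDist]
    congr 1
    rw [pow_succ, Matrix.mul_apply, Fintype.sum_prod_type]
    refine Finset.sum_congr rfl fun s _ => ?_
    simp only [ih]
    simp only [polMatrix, Matrix.of_apply, Finset.mul_sum]
    refine Finset.sum_congr rfl fun a _ => by ring

lemma expRw_eq (P : S → A → S → ℝ) (π : S → A → ℝ) (s₀ : S) (R : S → A → ℝ)
    (k : ℕ) :
    expRw P π s₀ R k
      = ∑ s, ((polMatrix P π) ^ k) s₀ s * (∑ a, π s a * R s a) := by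
  rw [expRw, Fintype.sum_prod_type]
  refine Finset.sum_congr rfl fun s _ => ?_
  rw [Finset.mul_sum]
  refine Finset.sum_congr rfl fun a _ => ?_
  rw [stepDist_eq]; ring

lemma avg_transfer [Nonempty S] (P : S → A → S → ℝ) (hP : IsKernel P)
    (R : S → A → ℝ) (sstar : S) (hrec : RecurrentForAll P sstar)
    (π : S → A → ℝ) (hπ : IsPolicy π) (s₀ s₀' : S) (v : ℝ)
    (hv : Tendsto (avgSeq P π s₀ R) atTop (𝓝 v)) :
    Tendsto (avgSeq P π s₀' R) atTop (𝓝 v) := by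
  set M := polMatrix P π with hM
  have hMst : StochMat M := polMatrix_stoch P hP π hπ
  set g : S → ℝ := fun s => ∑ a, π s a * R s a with hg
  have heq : ∀ T : ℕ, avgSeq P π s₀ R T - avgSeq P π s₀' R T
      = ∑ s, ((∑ k ∈ Finset.range T, ((M ^ k) s₀ s - (M ^ k) s₀' s)) / T)
          * g s := by
    intro T
    have hA : ∀ u : S, ∑ k ∈ Finset.range T, expRw P π u R k
        = ∑ s, (∑ k ∈ Finset.range T, (M ^ k) u s) * g s := by
      intro u
      rw [Finset.sum_congr rfl fun k (_ : k ∈ Finset.range T) =>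
        expRw_eq P π u R k]
      rw [Finset.sum_comm]
      exact Finset.sum_congr rfl fun s _ => (Finset.sum_mul _ _ _).symm
    rw [avgSeq, avgSeq, ← sub_div, hA, hA, ← Finset.sum_sub_distrib,
      Finset.sum_div]
    refine Finset.sum_congr rfl fun s _ => ?_
    rw [← sub_mul, ← Finset.sum_sub_distrib]
    ring
  have hdiff : Tendsto
      (fun T : ℕ => avgSeq P π s₀ R T - avgSeq P π s₀' R T) atTop (𝓝 0) := by
    have hsum := tendsto_finset_sum (Finset.univ : Finset S)
      (fun s _ => (cesaro_ergodic M hMst sstar (hrec π hπ) s₀ s₀' s).mul_const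
        (g s))
    simp only [zero_mul, Finset.sum_const_zero] at hsum
    refine hsum.congr fun T => ?_
    exact (heq T).symm
  have := hv.sub hdiff
  rw [sub_zero] at this
  refine this.congr fun T => ?_
  ring

end MDPGlue


/-- For a finite MDP with bounded reward, if some state `s*`
is recurrent under every stationary policy, then the optimal expected average
reward `sup_π lim_T (1/T) Σ_{k<T} E[R(s_k,a_k)]` does not depend on the
initial state. -/
theorem stmt1 {S A : Type*} [Fintype S] [Fintype A]
    [DecidableEq S] [DecidableEq A] [Nonempty S] [Nonempty A]
    (P : S → A → S → ℝ) (hP : IsKernel P) (R : S → A → ℝ)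
    (sstar : S) (hrec : RecurrentForAll P sstar) :
    ∀ s₀ s₀' : S, optAvg P s₀ R = optAvg P s₀' R := by
  intro s₀ s₀'
  unfold optAvg
  congr 1
  ext v
  constructor
  · rintro ⟨π, hπ, hv⟩
    exact ⟨π, hπ, avg_transfer P hP R sstar hrec π hπ s₀ s₀' v hv⟩
  · rintro ⟨π, hπ, hv⟩
    exact ⟨π, hπ, avg_transfer P hP R sstar hrec π hπ s₀' s₀ v hv⟩
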